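/- Let f : ℝⁿ → ℝ ∪ {+∞} be prox-regular at x̄ for 0, and let g(x) := √(max{f(x) − f(x̄), 0}). Then for every u ∈ ∂^> g(x̄), there exist τ ≥ 0, a unit vector w, sequences x_k → x̄ with f(x_k) → f(x̄) and f(x_k) > f(x̄), and v_k ∈ ∂f(x_k), such that (f(x_k) − f(x̄))/(½‖x_k − x̄‖²) → τ, (x_k − x̄)/‖x_k − x̄‖ → w, and v_k/‖x_k − x̄‖ → √(2τ)·u, with √(2τ)·u ∈ D(∂f)(x̄ | 0)(w). -/

import Mathlib

open Filter Topology
open scoped ENNReal NNReal Pointwise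

noncomputable section

abbrev En (n : ℕ) := EuclideanSpace ℝ (Fin n)

/-- Regular (Fréchet) subgradients of an extended-real-valued function. -/
def RegSubgrad {n : ℕ} (f : En n → EReal) (x : En n) : Set (En n) :=
  {v | ∀ ε : ℝ, 0 < ε → ∃ δ : ℝ, 0 < δ ∧ ∀ u : En n, ‖u - x‖ < δ → u ≠ x →
      f x + (((inner ℝ v (u - x) : ℝ) - ε * ‖u - x‖ : ℝ) : EReal) ≤ f u}

/-- Limiting (Mordukhovich) subgradients. -/
def LimSubgrad {n : ℕ} (f : En n → EReal) (x : En n) : Set (En n) :=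
  {v | ∃ xk vk : ℕ → En n,
      Tendsto xk atTop (nhds x) ∧ Tendsto vk atTop (nhds v) ∧
      Tendsto (fun k => f (xk k)) atTop (nhds (f x)) ∧
      ∀ k, vk k ∈ RegSubgrad f (xk k)}

/-- Outer limiting subgradients: limits of limiting subgradients taken at nearby
points where the function value is strictly larger and converges to `f x`. -/
def OuterSubgrad {n : ℕ} (f : En n → EReal) (x : En n) : Set (En n) :=
  {v | ∃ xk vk : ℕ → En n,
      Tendsto xk atTop (nhds x) ∧ Tendsto vk atTop (nhds v) ∧
      Tendsto (fun k => f (xk k)) atTop (nhds (f x)) ∧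
      (∀ k, f x < f (xk k)) ∧ ∀ k, vk k ∈ LimSubgrad f (xk k)}

/-- Distance from the origin to a set (`∞` for the empty set). -/
def DistZero {n : ℕ} (S : Set (En n)) : ℝ≥0∞ := EMetric.infEdist 0 S

/-- `f` is locally lower semicontinuous at `x`. -/
def LocallyLsc {n : ℕ} (f : En n → EReal) (x : En n) : Prop :=
  ∃ ε : ℝ, 0 < ε ∧ ∀ α : ℝ, (α : EReal) ≤ f x + (ε : ℝ) →
    IsClosed {y : En n | ‖y - x‖ ≤ ε ∧ f y ≤ (α : ℝ)}

/-- Prox-regularity of `f` at `x` for the subgradient `0`, where `c = f x`. -/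
def ProxRegularAt {n : ℕ} (f : En n → EReal) (x : En n) (c : ℝ) : Prop :=
  LocallyLsc f x ∧ (0 : En n) ∈ LimSubgrad f x ∧
    ∃ ε : ℝ, 0 < ε ∧ ∃ ρ : ℝ, 0 ≤ ρ ∧
      ∀ y v : En n, v ∈ LimSubgrad f y → ‖v‖ < ε → ‖y - x‖ < ε →
        f y < (c : ℝ) + (ε : ℝ) →
        ∀ x' : En n, ‖x' - x‖ ≤ ε →
          f y + (((inner ℝ v (x' - y) : ℝ) - ρ / 2 * ‖x' - y‖ ^ 2 : ℝ) : EReal) ≤ f x'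

/-- The graphical derivative `D(∂f)(x | 0)` of the subgradient mapping at `(x, 0)`:
`z ∈ D(∂f)(x|0)(w)` iff `(w, z)` is tangent to `gph ∂f` at `(x, 0)`. -/
def GraphDerivSubdiff {n : ℕ} (f : En n → EReal) (x : En n) (w : En n) : Set (En n) :=
  {z | ∃ (t : ℕ → ℝ) (wk zk : ℕ → En n),
      Tendsto t atTop (nhdsWithin 0 (Set.Ioi 0)) ∧
      Tendsto wk atTop (nhds w) ∧ Tendsto zk atTop (nhds z) ∧
      ∀ k, t k • zk k ∈ LimSubgrad f (x + t k • wk k)}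

-- helper: value formula
lemma val_formula {n : ℕ} (f : En n → EReal) (hbot : ∀ x, f x ≠ ⊥) (c : ℝ)
    (x : En n) (hx : f x ≠ ⊤)
    (hpos : 0 < Real.sqrt (max (f x - (c : ℝ)).toReal 0)) :
    f x = ((c + (Real.sqrt (max (f x - (c : ℝ)).toReal 0))^2 : ℝ) : EReal) := by
  set m := (f x).toReal with hm
  have hfx : f x = (m : EReal) := (EReal.coe_toReal hx (hbot x)).symm
  have hsub : (f x - (c : ℝ)) = ((m - c : ℝ) : EReal) := by
    rw [hfx]; exact (EReal.coe_sub m c).symm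
  rw [hsub, EReal.toReal_coe] at hpos ⊢
  have hmc : 0 < m - c := by
    by_contra h
    push_neg at h
    rw [max_eq_right h, Real.sqrt_zero] at hpos
    exact lt_irrefl 0 hpos
  rw [max_eq_left hmc.le] at hpos ⊢
  rw [Real.sq_sqrt hmc.le, hfx]
  norm_num

lemma chain_reg {n : ℕ} (f : En n → EReal) (hbot : ∀ x, f x ≠ ⊥) (c : ℝ)
    (g : En n → EReal)
    (hg : g = fun x => if f x = ⊤ then (⊤ : EReal)
      else ((Real.sqrt (max (f x - (c : ℝ)).toReal 0) : ℝ) : EReal))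
    (y : En n) (s : ℝ) (hs : 0 < s) (hfy : f y = ((c + s^2 : ℝ) : EReal))
    (u : En n) (hu : u ∈ RegSubgrad g y) : (2*s) • u ∈ RegSubgrad f y := by
  intro ε' hε'
  have hfyt : f y ≠ ⊤ := by rw [hfy]; exact EReal.coe_ne_top _
  have hgy : g y = ((s : ℝ) : EReal) := by
    rw [hg]
    simp only [if_neg hfyt]
    congr 1
    have : (f y - (c : ℝ)) = ((s^2 : ℝ) : EReal) := by
      rw [hfy, ← EReal.coe_sub]; norm_num
    rw [this, EReal.toReal_coe, max_eq_left (sq_nonneg s), Real.sqrt_sq hs.le]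
  set ε : ℝ := ε' / (2 * s) with hεdef
  have hε : 0 < ε := div_pos hε' (by linarith)
  obtain ⟨δ₀, hδ₀, hδ⟩ := hu ε hε
  refine ⟨min δ₀ (s / (‖u‖ + ε + 1)), lt_min hδ₀ (div_pos hs (by positivity)), ?_⟩
  intro x hx hxne
  rcases eq_or_ne (f x) ⊤ with hfx | hfx
  · rw [hfy, hfx, ← EReal.coe_add]; exact le_top
  -- real setup
  set r : ℝ := ‖x - y‖ with hr
  have hr0 : 0 < r := by rw [hr]; exact norm_sub_pos_iff.2 hxne
  set a : ℝ := (inner ℝ u (x - y) : ℝ) with ha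
  set L : ℝ := a - ε * r with hL
  have haleb : |a| ≤ ‖u‖ * r := by
    calc |a| ≤ ‖u‖ * ‖x - y‖ := abs_real_inner_le_norm u (x - y)
    _ = ‖u‖ * r := rfl
  have hrs : r < s / (‖u‖ + ε + 1) := lt_of_lt_of_le hx (min_le_right _ _)
  have hLbound : |L| < s := by
    have h1 : |L| ≤ (‖u‖ + ε) * r := by
      rw [hL]
      calc |a - ε * r| ≤ |a| + |ε * r| := abs_sub _ _
        _ ≤ ‖u‖ * r + ε * r := by
            have : |ε * r| = ε * r := abs_of_nonneg (by positivity)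
            rw [this]; linarith
        _ = (‖u‖ + ε) * r := by ring
    have h2 : (‖u‖ + ε) * r < (‖u‖ + ε + 1) * (s / (‖u‖ + ε + 1)) := by
      apply mul_lt_mul' (by linarith) hrs (by positivity) (by positivity)
    have h3 : (‖u‖ + ε + 1) * (s / (‖u‖ + ε + 1)) = s := by
      field_simp
    linarith
  have hsL : 0 < s + L := by
    have := abs_lt.1 hLbound
    linarith [this.1]
  -- from g subgradient
  have hgx := hδ x (lt_of_lt_of_le hx (min_le_left _ _)) hxne
  rw [hgy] at hgx
  have hgle : ((s + L : ℝ) : EReal) ≤ g x := by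
    rw [EReal.coe_add]
    calc ((s:ℝ):EReal) + ((L:ℝ):EReal) = ((s:ℝ):EReal) + (((inner ℝ u (x - y) : ℝ) - ε * ‖x - y‖ : ℝ) : EReal) := by rfl
    _ ≤ g x := hgx
  rw [hg] at hgle
  simp only [if_neg hfx] at hgle
  have hGx : s + L ≤ Real.sqrt (max (f x - (c : ℝ)).toReal 0) := EReal.coe_le_coe_iff.1 hgle
  have hsq : (s + L)^2 ≤ max (f x - (c : ℝ)).toReal 0 := by
    rw [← Real.le_sqrt hsL.le (le_max_right _ _)]
    exact hGx
  set m : ℝ := (f x).toReal with hm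
  have hfxm : f x = (m : EReal) := (EReal.coe_toReal hfx (hbot x)).symm
  have hsub : (f x - (c : ℝ)) = ((m - c : ℝ) : EReal) := by
    rw [hfxm]; exact (EReal.coe_sub m c).symm
  rw [hsub, EReal.toReal_coe] at hsq
  have hmc : (s + L)^2 ≤ m - c := by
    rcases le_or_gt (m - c) 0 with h | h
    · rw [max_eq_right h] at hsq; nlinarith
    · rwa [max_eq_left h.le] at hsq
  -- conclude
  have hinner : (inner ℝ ((2*s) • u) (x - y) : ℝ) = 2 * s * a := real_inner_smul_left u (x - y) (2*s)
  rw [hfy, hfxm, ← EReal.coe_add, EReal.coe_le_coe_iff, hinner]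
  have h2se : 2 * s * ε = ε' := by
    rw [hεdef]; field_simp
  have hexp : (s + L)^2 = s^2 + 2*s*a - 2*s*ε*r + L^2 := by
    rw [hL]; ring
  show c + s ^ 2 + (2 * s * a - ε' * ‖x - y‖) ≤ m
  have : ‖x - y‖ = r := rfl
  rw [this]
  nlinarith [sq_nonneg L]

lemma g_val {n : ℕ} (f : En n → EReal) (c : ℝ)
    (g : En n → EReal)
    (hg : g = fun x => if f x = ⊤ then (⊤ : EReal)
      else ((Real.sqrt (max (f x - (c : ℝ)).toReal 0) : ℝ) : EReal))
    (x : En n) (hx : f x ≠ ⊤) :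
    g x = ((Real.sqrt (max (f x - (c : ℝ)).toReal 0) : ℝ) : EReal) := by
  rw [hg]; simp only [if_neg hx]

lemma chain_lim {n : ℕ} (f : En n → EReal) (hbot : ∀ x, f x ≠ ⊥) (c : ℝ)
    (g : En n → EReal)
    (hg : g = fun x => if f x = ⊤ then (⊤ : EReal)
      else ((Real.sqrt (max (f x - (c : ℝ)).toReal 0) : ℝ) : EReal))
    (y : En n) (s : ℝ) (hs : 0 < s) (hfy : f y = ((c + s^2 : ℝ) : EReal))
    (u : En n) (hu : u ∈ LimSubgrad g y) : (2*s) • u ∈ LimSubgrad f y := by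
  obtain ⟨yk, uk, hyk, huk, hgk, hreg⟩ := hu
  have hfyt : f y ≠ ⊤ := by rw [hfy]; exact EReal.coe_ne_top _
  have hgy : g y = ((s : ℝ) : EReal) := by
    rw [g_val f c g hg y hfyt]
    congr 1
    have : (f y - (c : ℝ)) = ((s^2 : ℝ) : EReal) := by
      rw [hfy, ← EReal.coe_sub]; norm_num
    rw [this, EReal.toReal_coe, max_eq_left (sq_nonneg s), Real.sqrt_sq hs.le]
  rw [hgy] at hgk
  have h1 : ∀ᶠ i in atTop, g (yk i) < (((s+1 : ℝ)) : EReal) :=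
    hgk.eventually_lt_const (by exact_mod_cast (by linarith : s < s + 1))
  have h2 : ∀ᶠ i in atTop, (((s/2 : ℝ)) : EReal) < g (yk i) :=
    hgk.eventually_const_lt (by exact_mod_cast (by linarith : s/2 < s))
  obtain ⟨N, hN⟩ := eventually_atTop.1 (h1.and h2)
  set Y : ℕ → En n := fun i => yk (i + N) with hY
  set U : ℕ → En n := fun i => uk (i + N) with hU
  set S : ℕ → ℝ := fun i => Real.sqrt (max (f (Y i) - (c : ℝ)).toReal 0) with hS
  have hft : ∀ i, f (Y i) ≠ ⊤ := by
    intro i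
    intro htop
    have := (hN (i + N) (Nat.le_add_left N i)).1
    rw [hg] at this
    simp only [show f (yk (i + N)) = ⊤ from htop, if_pos] at this
    exact not_top_lt this
  have hgY : ∀ i, g (Y i) = ((S i : ℝ) : EReal) := fun i => g_val f c g hg (Y i) (hft i)
  have hSpos : ∀ i, 0 < S i := by
    intro i
    have := (hN (i + N) (Nat.le_add_left N i)).2
    rw [hgY i] at this
    have : (s/2 : ℝ) < S i := EReal.coe_lt_coe_iff.1 this
    linarith
  have hfval : ∀ i, f (Y i) = ((c + (S i)^2 : ℝ) : EReal) := fun i =>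
    val_formula f hbot c (Y i) (hft i) (hSpos i)
  -- S → s
  have hgk' : Tendsto (fun i => g (Y i)) atTop (𝓝 ((s:ℝ):EReal)) :=
    (tendsto_add_atTop_iff_nat N).2 hgk
  have hStend : Tendsto S atTop (𝓝 s) := by
    rw [← EReal.tendsto_coe]
    exact hgk'.congr (fun i => (hgY i))
  refine ⟨Y, fun i => (2 * S i) • U i, (tendsto_add_atTop_iff_nat N).2 hyk, ?_, ?_, ?_⟩
  · have hU' : Tendsto U atTop (𝓝 u) := (tendsto_add_atTop_iff_nat N).2 huk
    have : Tendsto (fun i => 2 * S i) atTop (𝓝 (2 * s)) := hStend.const_mul 2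
    exact this.smul hU'
  · rw [hfy]
    have h : Tendsto (fun i => ((c + (S i)^2 : ℝ) : EReal)) atTop (𝓝 ((c+s^2:ℝ):EReal)) :=
      EReal.tendsto_coe.2 (tendsto_const_nhds.add (hStend.pow 2))
    exact h.congr (fun i => (hfval i).symm)
  · intro i
    exact chain_reg f hbot c g hg (Y i) (S i) (hSpos i) (hfval i) (U i) (hreg (i + N))

set_option maxHeartbeats 2000000 in
/-- for `f` prox-regular at `xb` for `0`, every outer limiting
subgradient `u` of `g = √(max{f - f(xb),0})` is generated along a ray: there
exist `τ ≥ 0`, a unit vector `w`, and subgradient sequences realizing the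
normalized limits, with `√(2τ)·u ∈ D(∂f)(xb|0)(w)`. -/
theorem statement_10 {n : ℕ} (f : En n → EReal) (hbot : ∀ x, f x ≠ ⊥)
    (xb : En n) (c : ℝ) (hfc : f xb = (c : ℝ))
    (hprox : ProxRegularAt f xb c)
    (g : En n → EReal)
    (hg : g = fun x => if f x = ⊤ then (⊤ : EReal)
      else ((Real.sqrt (max (f x - (c : ℝ)).toReal 0) : ℝ) : EReal))
    (u : En n) (hu : u ∈ OuterSubgrad g xb) :
    ∃ τ : ℝ, 0 ≤ τ ∧ ∃ w : En n, ‖w‖ = 1 ∧ ∃ xk vk : ℕ → En n,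
      Tendsto xk atTop (nhds xb) ∧
      Tendsto (fun k => f (xk k)) atTop (nhds (f xb)) ∧
      (∀ k, f xb < f (xk k)) ∧
      (∀ k, vk k ∈ LimSubgrad f (xk k)) ∧
      Tendsto (fun k => (f (xk k) - (c : ℝ)).toReal / (‖xk k - xb‖ ^ 2 / 2))
        atTop (nhds τ) ∧
      Tendsto (fun k => (‖xk k - xb‖)⁻¹ • (xk k - xb)) atTop (nhds w) ∧
      Tendsto (fun k => (‖xk k - xb‖)⁻¹ • vk k) atTop (nhds (Real.sqrt (2 * τ) • u)) ∧
      Real.sqrt (2 * τ) • u ∈ GraphDerivSubdiff f xb w := by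
  obtain ⟨yk, uk, hyk, huk, hgk, hgt, hlim⟩ := hu
  have hfxbt : f xb ≠ ⊤ := by rw [hfc]; exact EReal.coe_ne_top _
  have hgxb : g xb = (((0:ℝ)) : EReal) := by
    rw [g_val f c g hg xb hfxbt]
    congr 1
    have : (f xb - (c : ℝ)) = (((0:ℝ)) : EReal) := by
      rw [hfc, ← EReal.coe_sub]; norm_num
    rw [this, EReal.toReal_coe, max_self, Real.sqrt_zero]
  rw [hgxb] at hgk hgt
  -- Stage 1 : tail where g is finite
  have h1 : ∀ᶠ i in atTop, g (yk i) < (((1 : ℝ)) : EReal) :=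
    hgk.eventually_lt_const (by exact_mod_cast (by norm_num : (0:ℝ) < 1))
  obtain ⟨N1, hN1⟩ := eventually_atTop.1 h1
  set Y : ℕ → En n := fun i => yk (i + N1) with hYdef
  set U : ℕ → En n := fun i => uk (i + N1) with hUdef
  have hyY : Tendsto Y atTop (𝓝 xb) := (tendsto_add_atTop_iff_nat N1).2 hyk
  have hUu : Tendsto U atTop (𝓝 u) := (tendsto_add_atTop_iff_nat N1).2 huk
  have hft : ∀ i, f (Y i) ≠ ⊤ := by
    intro i htop
    have := hN1 (i + N1) (Nat.le_add_left N1 i)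
    rw [hg] at this
    simp only [show f (yk (i + N1)) = ⊤ from htop, if_pos] at this
    exact not_top_lt this
  set S : ℕ → ℝ := fun i => Real.sqrt (max (f (Y i) - (c : ℝ)).toReal 0) with hSdef
  have hgY : ∀ i, g (Y i) = ((S i : ℝ) : EReal) := fun i => g_val f c g hg (Y i) (hft i)
  have hSpos : ∀ i, 0 < S i := by
    intro i
    have h0 : (((0:ℝ)) : EReal) < g (Y i) := hgt (i + N1)
    rw [hgY i] at h0
    exact EReal.coe_lt_coe_iff.1 h0
  have hfval : ∀ i, f (Y i) = ((c + (S i)^2 : ℝ) : EReal) := fun i =>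
    val_formula f hbot c (Y i) (hft i) (hSpos i)
  have hgk' : Tendsto (fun i => g (Y i)) atTop (𝓝 (((0:ℝ)):EReal)) :=
    (tendsto_add_atTop_iff_nat N1).2 hgk
  have hStend : Tendsto S atTop (𝓝 0) := by
    rw [← EReal.tendsto_coe]
    exact hgk'.congr (fun i => hgY i)
  set V : ℕ → En n := fun i => (2 * S i) • U i with hVdef
  have hVmem : ∀ i, V i ∈ LimSubgrad f (Y i) := fun i =>
    chain_lim f hbot c g hg (Y i) (S i) (hSpos i) (hfval i) (U i) (hlim (i + N1))
  have hVtend : Tendsto V atTop (𝓝 0) := by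
    have h := (hStend.const_mul 2).smul hUu
    simpa using h
  have hflt : ∀ i, f xb < f (Y i) := by
    intro i
    rw [hfc, hfval i]
    exact_mod_cast (by nlinarith [hSpos i] : c < c + (S i)^2)
  have hftend : Tendsto (fun i => f (Y i)) atTop (𝓝 ((c:ℝ) : EReal)) := by
    have h : Tendsto (fun i => ((c + (S i)^2 : ℝ) : EReal)) atTop (𝓝 ((c + 0^2 : ℝ) : EReal)) :=
      EReal.tendsto_coe.2 (tendsto_const_nhds.add (hStend.pow 2))
    simpa using h.congr (fun i => (hfval i).symm)
  -- Stage 2 : prox-regularity eventual bounds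
  obtain ⟨-, -, ε, hε, ρ, hρ, hineq⟩ := hprox
  have e1 : ∀ᶠ i in atTop, ‖V i‖ < ε := by
    have := hVtend.norm
    rw [norm_zero] at this
    exact this.eventually_lt_const hε
  have e2 : ∀ᶠ i in atTop, ‖Y i - xb‖ < ε := by
    have h : Tendsto (fun i => ‖Y i - xb‖) atTop (𝓝 0) := by
      have := (hyY.sub_const xb).norm
      simpa using this
    exact h.eventually_lt_const hε
  have e3 : ∀ᶠ i in atTop, f (Y i) < ((c:ℝ) : EReal) + ((ε:ℝ) : EReal) := by
    apply hftend.eventually_lt_const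
    rw [← EReal.coe_add]
    exact_mod_cast (by linarith : c < c + ε)
  have e4 : ∀ᶠ i in atTop, ‖U i‖ < ‖u‖ + 1 := by
    exact hUu.norm.eventually_lt_const (by linarith)
  obtain ⟨N2, hN2⟩ := eventually_atTop.1 (((e1.and e2).and e3).and e4)
  set Y2 : ℕ → En n := fun i => Y (i + N2) with hY2def
  set U2 : ℕ → En n := fun i => U (i + N2) with hU2def
  set S2 : ℕ → ℝ := fun i => S (i + N2) with hS2def
  set V2 : ℕ → En n := fun i => V (i + N2) with hV2def
  have hN2' : ∀ i, (‖V2 i‖ < ε ∧ ‖Y2 i - xb‖ < ε) ∧ f (Y2 i) < ((c:ℝ) : EReal) + ((ε:ℝ) : EReal) ∧ ‖U2 i‖ < ‖u‖ + 1 := by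
    intro i
    have := hN2 (i + N2) (Nat.le_add_left N2 i)
    exact ⟨⟨this.1.1.1, this.1.1.2⟩, this.1.2, this.2⟩
  set r : ℕ → ℝ := fun i => ‖Y2 i - xb‖ with hrdef
  have hr0 : ∀ i, 0 < r i := by
    intro i
    rw [hrdef]
    simp only
    rw [norm_sub_pos_iff]
    intro h
    exact absurd (h ▸ hflt (i + N2)) (lt_irrefl _)
  -- Key inequality from prox-regularity
  have hkey : ∀ i, (S2 i)^2 ≤ 2 * S2 i * ‖U2 i‖ * r i + ρ/2 * (r i)^2 := by
    intro i
    have h := hineq (Y2 i) (V2 i) (hVmem (i + N2)) (hN2' i).1.1 (hN2' i).1.2 (hN2' i).2.1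
      xb (by simp [hε.le])
    rw [hfc, hfval (i + N2), ← EReal.coe_add, EReal.coe_le_coe_iff] at h
    have hnorm : ‖xb - Y2 i‖ = r i := norm_sub_rev xb (Y2 i)
    have hinner : |(inner ℝ (V2 i) (xb - Y2 i) : ℝ)| ≤ ‖V2 i‖ * r i := by
      calc |(inner ℝ (V2 i) (xb - Y2 i) : ℝ)| ≤ ‖V2 i‖ * ‖xb - Y2 i‖ := abs_real_inner_le_norm _ _
        _ = ‖V2 i‖ * r i := by rw [hnorm]
    have hVnorm : ‖V2 i‖ = 2 * S2 i * ‖U2 i‖ := by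
      show ‖(2 * S (i + N2)) • U (i + N2)‖ = _
      rw [norm_smul, Real.norm_eq_abs, abs_of_nonneg (by linarith [hSpos (i + N2)])]
    rw [hnorm] at h
    have h1 : -( ‖V2 i‖ * r i) ≤ (inner ℝ (V2 i) (xb - Y2 i) : ℝ) := neg_le_of_abs_le hinner
    rw [hVnorm] at h1
    nlinarith [h, h1]
  -- Bound on S2 / r
  set M : ℝ := ‖u‖ + 1 with hMdef
  have hM : 0 < M := by positivity
  set B : ℝ := max 1 (2*M + ρ/2) with hBdef
  have hB1 : (1:ℝ) ≤ B := le_max_left _ _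
  have hB2 : 2*M + ρ/2 ≤ B := le_max_right _ _
  have hSr : ∀ i, S2 i ≤ B * r i := by
    intro i
    have hU2b : ‖U2 i‖ ≤ M := (hN2' i).2.2.le
    have hk := hkey i
    have hS2p : 0 < S2 i := hSpos (i + N2)
    have hrp : 0 < r i := hr0 i
    rcases le_or_gt (S2 i) (r i) with h | h
    · nlinarith
    · have hstep : (S2 i)^2 ≤ 2 * M * (S2 i * r i) + ρ/2 * (S2 i * r i) := by
        have t1 : (2 * S2 i * r i) * ‖U2 i‖ ≤ (2 * S2 i * r i) * M :=
          mul_le_mul_of_nonneg_left hU2b (by positivity)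
        have t2 : (ρ/2 * r i) * r i ≤ (ρ/2 * r i) * S2 i :=
          mul_le_mul_of_nonneg_left h.le (by positivity)
        nlinarith [t1, t2]
      have hstep2 : (2 * M + ρ/2) * (S2 i * r i) ≤ B * (S2 i * r i) :=
        mul_le_mul_of_nonneg_right hB2 (by positivity)
      nlinarith [hstep, hstep2, mul_pos hS2p hrp]
  set q : ℕ → ℝ := fun i => S2 i / r i with hqdef
  have hqIcc : ∀ i, q i ∈ Set.Icc (0:ℝ) B := by
    intro i
    constructor
    · exact div_nonneg (hSpos (i + N2)).le (hr0 i).le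
    · rw [hqdef]
      exact div_le_of_le_mul₀ (hr0 i).le (by linarith [hB1]) (by linarith [hSr i, mul_comm B (r i)])
  set d : ℕ → En n := fun i => (r i)⁻¹ • (Y2 i - xb) with hddef
  have hdsph : ∀ i, d i ∈ Metric.sphere (0 : En n) 1 := by
    intro i
    rw [mem_sphere_zero_iff_norm]
    show ‖(r i)⁻¹ • (Y2 i - xb)‖ = 1
    rw [norm_smul, Real.norm_eq_abs, abs_of_pos (inv_pos.2 (hr0 i))]
    exact inv_mul_cancel₀ (hr0 i).ne'
  -- compactness extraction
  have hK : IsCompact ((Metric.sphere (0 : En n) 1) ×ˢ Set.Icc (0:ℝ) B) :=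
    (isCompact_sphere _ _).prod isCompact_Icc
  obtain ⟨⟨w, qq⟩, hwq, φ, hφ, hconv⟩ :=
    hK.tendsto_subseq (x := fun i => (d i, q i)) (fun i => ⟨hdsph i, hqIcc i⟩)
  have hφtop : Tendsto φ atTop atTop := hφ.tendsto_atTop
  have hw : ‖w‖ = 1 := mem_sphere_zero_iff_norm.1 hwq.1
  have hq0 : 0 ≤ qq := hwq.2.1
  have hdconv : Tendsto (fun k => d (φ k)) atTop (𝓝 w) :=
    (continuous_fst.tendsto _).comp hconv
  have hqconv : Tendsto (fun k => q (φ k)) atTop (𝓝 qq) :=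
    (continuous_snd.tendsto _).comp hconv
  refine ⟨2 * qq^2, by positivity, w, hw, fun k => Y2 (φ k), fun k => V2 (φ k), ?_, ?_, ?_, ?_, ?_, ?_, ?_, ?_⟩
  · exact (((tendsto_add_atTop_iff_nat N2).2 hyY).comp hφtop)
  · rw [hfc]
    exact (((tendsto_add_atTop_iff_nat N2).2 hftend).comp hφtop)
  · exact fun k => hflt (φ k + N2)
  · exact fun k => hVmem (φ k + N2)
  · have hid : ∀ k, (f (Y2 (φ k)) - (c : ℝ)).toReal / (‖Y2 (φ k) - xb‖ ^ 2 / 2) = 2 * (q (φ k))^2 := by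
      intro k
      have h1 : (f (Y2 (φ k)) - (c : ℝ)) = (((S2 (φ k))^2 : ℝ) : EReal) := by
        rw [show f (Y2 (φ k)) = ((c + (S2 (φ k))^2 : ℝ) : EReal) from hfval (φ k + N2), ← EReal.coe_sub]
        norm_num
      rw [h1, EReal.toReal_coe]
      have hrk : ‖Y2 (φ k) - xb‖ = r (φ k) := rfl
      rw [hrk, hqdef]
      have := (hr0 (φ k)).ne'
      field_simp
    have h2 : Tendsto (fun k => 2 * (q (φ k))^2) atTop (𝓝 (2 * qq^2)) :=
      (hqconv.pow 2).const_mul 2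
    exact h2.congr (fun k => (hid k).symm)
  · exact hdconv
  · have hsq : Real.sqrt (2 * (2 * qq^2)) = 2 * qq := by
      rw [show 2 * (2 * qq^2) = (2*qq)^2 by ring, Real.sqrt_sq (by linarith)]
    rw [hsq]
    have hid : ∀ k, (‖Y2 (φ k) - xb‖)⁻¹ • V2 (φ k) = (2 * q (φ k)) • U2 (φ k) := by
      intro k
      show (r (φ k))⁻¹ • ((2 * S (φ k + N2)) • U (φ k + N2)) = _
      rw [smul_smul, hqdef]
      congr 1
      have := (hr0 (φ k)).ne'
      show (r (φ k))⁻¹ * (2 * S2 (φ k)) = 2 * (S2 (φ k) / r (φ k))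
      field_simp
    have hU2conv : Tendsto (fun k => U2 (φ k)) atTop (𝓝 u) :=
      (((tendsto_add_atTop_iff_nat N2).2 hUu).comp hφtop)
    have h3 : Tendsto (fun k => (2 * q (φ k)) • U2 (φ k)) atTop (𝓝 ((2 * qq) • u)) :=
      (hqconv.const_mul 2).smul hU2conv
    exact (h3.congr (fun k => (hid k).symm))
  · -- graphical derivative
    have hsq : Real.sqrt (2 * (2 * qq^2)) = 2 * qq := by
      rw [show 2 * (2 * qq^2) = (2*qq)^2 by ring, Real.sqrt_sq (by linarith)]
    rw [hsq]
    refine ⟨fun k => r (φ k), fun k => d (φ k), fun k => (2 * q (φ k)) • U2 (φ k), ?_, hdconv, ?_, ?_⟩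
    · rw [tendsto_nhdsWithin_iff]
      constructor
      · have hrt : Tendsto r atTop (𝓝 0) := by
          have := (((tendsto_add_atTop_iff_nat N2).2 hyY).sub_const xb).norm
          simpa using this
        exact hrt.comp hφtop
      · exact Eventually.of_forall (fun k => hr0 (φ k))
    · have hU2conv : Tendsto (fun k => U2 (φ k)) atTop (𝓝 u) :=
        (((tendsto_add_atTop_iff_nat N2).2 hUu).comp hφtop)
      exact (hqconv.const_mul 2).smul hU2conv
    · intro k
      have hrne : r (φ k) ≠ 0 := (hr0 (φ k)).ne'
      have h1 : r (φ k) • ((2 * q (φ k)) • U2 (φ k)) = V2 (φ k) := by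
        rw [smul_smul, hqdef]
        show (r (φ k) * (2 * (S2 (φ k) / r (φ k)))) • U2 (φ k) = (2 * S (φ k + N2)) • U (φ k + N2)
        congr 1
        field_simp
        rfl
      have h2 : xb + r (φ k) • d (φ k) = Y2 (φ k) := by
        show xb + r (φ k) • ((r (φ k))⁻¹ • (Y2 (φ k) - xb)) = Y2 (φ k)
        rw [smul_inv_smul₀ hrne]
        abel
      rw [h1, h2]
      exact hVmem (φ k + N2)
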